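/- Let S ⊆ Fin D have cardinality d ≥ 1 and suppose E is injective on S (E n ≠ E m for distinct n, m ∈ S). Let ρ be a state supported on the shell of S, Π_A an observable, and ε > 0. If |⟨e n, Π_A (e n)⟩ − ⟨Π_A⟩_S| < ε for every n ∈ S (eigenstate thermalization to accuracy ε), then the infinite-time average lim_{T→∞} (1/(2T)) ∫_{−T}^{T} Tr(ρ(t) Π_A) dt exists and satisfies |lim_{T→∞} (1/(2T)) ∫_{−T}^{T} Tr(ρ(t) Π_A) dt − ⟨Π_A⟩_S| < ε. -/

import Mathlib

open MeasureTheory Filter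
open scoped ComplexOrder

namespace QET

variable {D : ℕ}

/-- `exp(-itH)` for the Hamiltonian `H = Σ_n (E n) • P_n`, where `P_n` is the orthogonal
projection onto the `n`-th vector of the fixed orthonormal eigenbasis `e`.  All operators are
written as matrices in this eigenbasis, so `H` is diagonal and
`exp(-itH) = diag (exp (-i t E n))`. -/
noncomputable def U (E : Fin D → ℝ) (t : ℝ) : Matrix (Fin D) (Fin D) ℂ :=
  Matrix.diagonal fun n => Complex.exp (-(Complex.I) * t * (E n))

/-- Time evolution `X(t) = exp(-itH) · X · exp(itH)`. -/
noncomputable def evolve (E : Fin D → ℝ) (t : ℝ) (X : Matrix (Fin D) (Fin D) ℂ) :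
    Matrix (Fin D) (Fin D) ℂ :=
  U E t * X * U E (-t)

/-- A state: a positive semidefinite operator with unit trace. -/
def IsState (ρ : Matrix (Fin D) (Fin D) ℂ) : Prop :=
  ρ.PosSemidef ∧ ρ.trace = 1

/-- An observable: an orthogonal projection (Hermitian idempotent). -/
def IsObservable (P : Matrix (Fin D) (Fin D) ℂ) : Prop :=
  P.IsHermitian ∧ P * P = P

/-- Orthogonal projection `Π_S` onto the energy shell spanned by `{e n : n ∈ S}`. -/
noncomputable def shellProj (S : Finset (Fin D)) : Matrix (Fin D) (Fin D) ℂ :=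
  Matrix.diagonal fun n => if n ∈ S then 1 else 0

/-- A state is supported on the shell of `S`: `Π_S ρ Π_S = ρ`. -/
def SupportedOn (S : Finset (Fin D)) (ρ : Matrix (Fin D) (Fin D) ℂ) : Prop :=
  shellProj S * ρ * shellProj S = ρ

/-- Thermal value `⟨P⟩_S = Tr(P Π_S)/d` (a real number: trace of Hermitian products below). -/
noncomputable def thermVal (S : Finset (Fin D)) (P : Matrix (Fin D) (Fin D) ℂ) : ℝ :=
  (P * shellProj S).trace.re / S.card

/-- Fourier transform `w̃(E) = ∫ w(t) exp(-iEt) dt` of a weight function. -/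
noncomputable def fourier (w : ℝ → ℝ) (En : ℝ) : ℂ :=
  ∫ t : ℝ, (w t : ℂ) * Complex.exp (-(Complex.I) * En * t)

/-- A weight function: integrable, nonnegative, normalized to `∫ w = 1`. -/
structure IsWeight (w : ℝ → ℝ) : Prop where
  integrable : Integrable w
  nonneg : ∀ t, 0 ≤ w t
  normalized : (∫ t : ℝ, w t) = 1

/-- A completely positive weight: a weight function whose Fourier transform is a
nonnegative real number everywhere. -/
structure IsCPWeight (w : ℝ → ℝ) extends IsWeight w : Prop where
  fourier_im : ∀ En : ℝ, (fourier w En).im = 0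
  fourier_nonneg : ∀ En : ℝ, 0 ≤ (fourier w En).re

/-- The matrix element `⟨e n, (P - ⟨P⟩_S · 1) e m⟩ = ⟨e n, P e m⟩ - ⟨P⟩_S δ_{nm}`. -/
noncomputable def devEl (S : Finset (Fin D)) (P : Matrix (Fin D) (Fin D) ℂ)
    (n m : Fin D) : ℂ :=
  P n m - if n = m then (thermVal S P : ℂ) else 0

/-- Band variance `Σ_{n,m ∈ S, |E n - E m| < ΔE} |⟨e n, P e m⟩ - ⟨P⟩_S δ_{nm}|²`. -/
noncomputable def bandVar (S : Finset (Fin D)) (E : Fin D → ℝ) (ΔE : ℝ)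
    (P : Matrix (Fin D) (Fin D) ℂ) : ℝ :=
  ∑ n ∈ S, ∑ m ∈ S,
    if |E n - E m| < ΔE then ‖devEl S P n m‖ ^ 2 else 0

/-- Energy-band thermalization in the shell `S` with bandwidth `ΔE` and accuracy `ε`. -/
def EnergyBandTherm (S : Finset (Fin D)) (E : Fin D → ℝ) (ΔE ε : ℝ)
    (P : Matrix (Fin D) (Fin D) ℂ) : Prop :=
  (1 / (S.card : ℝ)) * bandVar S E ΔE P < ε ^ 2

/-- Expectation value `⟨v, P v⟩` of an operator in a vector. -/
noncomputable def expVal (P : Matrix (Fin D) (Fin D) ℂ) (v : Fin D → ℂ) : ℂ :=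
  dotProduct (star v) (P.mulVec v)

/-- Time average of `exp(i a t)` over `[-T, T]` tends to `1` if `a = 0` and `0` otherwise. -/
lemma avg_exp (a : ℝ) :
    Tendsto (fun T : ℝ => (1 / (2 * T) : ℝ) • ∫ t in (-T)..T, Complex.exp (Complex.I * a * t))
      atTop (nhds (if a = 0 then 1 else 0)) := by
  by_cases ha : a = 0
  · simp only [ha, if_pos rfl]
    have h : (fun T : ℝ => (1 / (2 * T) : ℝ) • ∫ t in (-T)..T, Complex.exp (Complex.I * (0:ℝ) * t))
        =ᶠ[atTop] fun _ => (1 : ℂ) := by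
      filter_upwards [eventually_gt_atTop (0:ℝ)] with T hT
      simp only [Complex.ofReal_zero, mul_zero, zero_mul, Complex.exp_zero]
      rw [intervalIntegral.integral_const, smul_smul]
      have : (1 / (2 * T)) * (T - -T) = 1 := by field_simp; ring
      rw [this, one_smul]
    exact Tendsto.congr' h.symm tendsto_const_nhds
  · simp only [if_neg ha]
    have hTa : 0 < |a| := abs_pos.mpr ha
    have e1 : ∀ s : ℝ, ‖Complex.exp (Complex.I * a * s)‖ = 1 := by
      intro s
      rw [Complex.norm_exp]
      simp [Complex.mul_re]
    have hkey : ∀ᶠ T in atTop,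
        ‖(1 / (2 * T) : ℝ) • ∫ t in (-T)..T, Complex.exp (Complex.I * a * t)‖ ≤ 1 / (T * |a|) := by
      filter_upwards [eventually_gt_atTop (0:ℝ)] with T hT
      have hc : (Complex.I * a : ℂ) ≠ 0 := by
        simp [Complex.ext_iff, ha]
      have hz : ‖∫ t in (-T)..T, Complex.exp (Complex.I * a * t)‖ ≤ 2 / |a| := by
        rw [integral_exp_mul_complex hc (a := -T) (b := T), norm_div]
        have hden : ‖(Complex.I * (a:ℂ))‖ = |a| := by
          rw [norm_mul]
          simp
        rw [hden]
        gcongr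
        calc ‖Complex.exp (Complex.I * a * T) - Complex.exp (Complex.I * a * ((-T:ℝ)))‖
            ≤ ‖Complex.exp (Complex.I * a * T)‖ + ‖Complex.exp (Complex.I * a * ((-T:ℝ)))‖ :=
              norm_sub_le _ _
          _ = 2 := by rw [e1, e1]; norm_num
      rw [norm_smul]
      have hn : ‖(1 / (2 * T) : ℝ)‖ = 1 / (2 * T) := by
        rw [Real.norm_eq_abs, abs_of_pos]; positivity
      rw [hn]
      calc (1 / (2 * T)) * ‖∫ t in (-T)..T, Complex.exp (Complex.I * a * t)‖
          ≤ (1 / (2 * T)) * (2 / |a|) := by gcongr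
        _ = 1 / (T * |a|) := by field_simp
    have hlim : Tendsto (fun T : ℝ => 1 / (T * |a|)) atTop (nhds 0) := by
      have h2 := tendsto_inv_atTop_zero (𝕜 := ℝ)
      have := h2.const_mul (|a|⁻¹)
      simp only [mul_zero] at this
      refine this.congr fun T => ?_
      field_simp
    exact squeeze_zero_norm' hkey hlim

set_option maxHeartbeats 1600000 in
/-- **Quantum eigenstate thermalization + nondegeneracy implies thermalization o.a.**
Let `S ⊆ Fin D` with `|S| = d ≥ 1`, suppose `E` is injective on `S`, let `ρ` be a state
supported on the shell of `S` and `Π_A` an observable with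
`|⟨e n, Π_A e n⟩ - ⟨Π_A⟩_S| < ε` for all `n ∈ S`.  Then the infinite-time average of
`Tr(ρ(t) Π_A)` exists and is within `ε` of the thermal value `⟨Π_A⟩_S`. -/
theorem eigenstate_thermalization_implies_thermalization_oa
    {D : ℕ} (hD : 0 < D) (E : Fin D → ℝ)
    (S : Finset (Fin D)) (hd : 1 ≤ S.card)
    (hinj : ∀ n ∈ S, ∀ m ∈ S, n ≠ m → E n ≠ E m)
    (ρ PiA : Matrix (Fin D) (Fin D) ℂ)
    (hρ : IsState ρ) (hsupp : SupportedOn S ρ) (hPiA : IsObservable PiA)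
    (ε : ℝ) (hε : 0 < ε)
    (hET : ∀ n ∈ S, ‖PiA n n - (thermVal S PiA : ℂ)‖ < ε) :
    ∃ L : ℂ,
      Filter.Tendsto
        (fun T : ℝ => (1 / (2 * T) : ℝ) • ∫ t in (-T)..T, (evolve E t ρ * PiA).trace)
        Filter.atTop (nhds L) ∧
      ‖L - (thermVal S PiA : ℂ)‖ < ε := by
  classical
  set v : ℂ := (thermVal S PiA : ℂ) with hv
  -- trace expansion as a sum over pairs
  have htr : ∀ t : ℝ, (evolve E t ρ * PiA).trace =
      ∑ p : Fin D × Fin D,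
        ρ p.1 p.2 * PiA p.2 p.1 * Complex.exp (Complex.I * ((E p.2 - E p.1 : ℝ)) * t) := by
    intro t
    rw [Fintype.sum_prod_type]
    rw [Matrix.trace]
    simp only [Matrix.diag]
    rw [Finset.sum_congr rfl fun n _ => Matrix.mul_apply (M := evolve E t ρ) (N := PiA)]
    refine Finset.sum_congr rfl fun n _ => Finset.sum_congr rfl fun m _ => ?_
    have he : evolve E t ρ n m =
        Complex.exp (-(Complex.I) * t * E n) * ρ n m * Complex.exp (-(Complex.I) * (-t) * E m) := by
      simp [evolve, U, Matrix.mul_diagonal, Matrix.diagonal_mul, mul_assoc]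
    rw [he, show Complex.exp (-(Complex.I) * t * E n) * ρ n m *
          Complex.exp (-(Complex.I) * (-t) * E m)
        = ρ n m * (Complex.exp (-(Complex.I) * t * E n) * Complex.exp (-(Complex.I) * (-t) * E m))
        by ring, ← Complex.exp_add]
    push_cast
    ring_nf
  -- the candidate limit
  set L : ℂ := ∑ p : Fin D × Fin D,
      ρ p.1 p.2 * PiA p.2 p.1 * (if (E p.2 - E p.1 : ℝ) = 0 then 1 else 0) with hL
  refine ⟨L, ?_, ?_⟩
  · -- convergence
    have hfun : ∀ T : ℝ,
        (1 / (2 * T) : ℝ) • ∫ t in (-T)..T, (evolve E t ρ * PiA).trace =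
        ∑ p : Fin D × Fin D, ρ p.1 p.2 * PiA p.2 p.1 *
          ((1 / (2 * T) : ℝ) •
            ∫ t in (-T)..T, Complex.exp (Complex.I * ((E p.2 - E p.1 : ℝ)) * t)) := by
      intro T
      have hint : ∀ (a : ℝ), IntervalIntegrable
          (fun t : ℝ => Complex.exp (Complex.I * (a : ℂ) * t)) volume (-T) T := fun a =>
        (Complex.continuous_exp.comp
          ((continuous_const.mul Complex.continuous_ofReal))).intervalIntegrable _ _
      rw [intervalIntegral.integral_congr (g := fun t : ℝ => ∑ p : Fin D × Fin D,
            ρ p.1 p.2 * PiA p.2 p.1 * Complex.exp (Complex.I * ((E p.2 - E p.1 : ℝ)) * t))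
          fun t _ => htr t]
      rw [(intervalIntegral.integral_finset_sum
        (f := fun (p : Fin D × Fin D) (t : ℝ) =>
          ρ p.1 p.2 * PiA p.2 p.1 * Complex.exp (Complex.I * ((E p.2 - E p.1 : ℝ)) * t))
        (fun p _ => (hint (E p.2 - E p.1)).const_mul _)).trans
        (Finset.sum_congr rfl fun p _ => intervalIntegral.integral_const_mul _ _),
        Finset.smul_sum]
      exact Finset.sum_congr rfl fun p _ => (mul_smul_comm _ _ _).symm
    have hconv : Tendsto (fun T : ℝ => ∑ p : Fin D × Fin D, ρ p.1 p.2 * PiA p.2 p.1 *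
          ((1 / (2 * T) : ℝ) •
            ∫ t in (-T)..T, Complex.exp (Complex.I * ((E p.2 - E p.1 : ℝ)) * t)))
        atTop (nhds L) := by
      rw [hL]
      exact tendsto_finset_sum _ fun p _ => (avg_exp (E p.2 - E p.1)).const_mul _
    exact hconv.congr fun T => (hfun T).symm
  · -- the estimate
    have hzero : ∀ n m : Fin D, (n ∉ S ∨ m ∉ S) → ρ n m = 0 := by
      intro n m hnm
      have h := congrFun (congrFun hsupp n) m
      simp only [shellProj, Matrix.mul_diagonal, Matrix.diagonal_mul] at h
      rcases hnm with h' | h'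
      · rw [← h]; simp [h']
      · rw [← h]; simp [h']
    -- L equals the diagonal sum on S
    have hLdiag : L = ∑ n ∈ S, ρ n n * PiA n n := by
      rw [hL, Fintype.sum_prod_type]
      have hstep : ∀ n : Fin D, (∑ m : Fin D,
          ρ n m * PiA m n * (if (E m - E n : ℝ) = 0 then 1 else 0))
          = if n ∈ S then ρ n n * PiA n n else 0 := by
        intro n
        have hterm : ∀ m : Fin D, ρ n m * PiA m n * (if (E m - E n : ℝ) = 0 then 1 else 0)
            = if m = n then (if n ∈ S then ρ n n * PiA n n else 0) else 0 := by
          intro m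
          by_cases hm : m = n
          · subst hm
            by_cases hn : m ∈ S
            · simp [hn]
            · simp [hn, hzero m m (Or.inl hn)]
          · simp only [if_neg hm]
            by_cases hn : n ∈ S
            · by_cases hmS : m ∈ S
              · have : E m - E n ≠ 0 := sub_ne_zero.mpr (hinj m hmS n hn hm)
                simp [this]
              · simp [hzero n m (Or.inr hmS)]
            · simp [hzero n m (Or.inl hn)]
        rw [Finset.sum_congr rfl fun m _ => hterm m, Finset.sum_ite_eq' Finset.univ n,
          if_pos (Finset.mem_univ n)]
      rw [Finset.sum_congr rfl fun n _ => hstep n, Finset.sum_ite_mem, Finset.univ_inter]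
    -- diagonal entries are nonnegative reals
    have hdiag_nonneg : ∀ n : Fin D, 0 ≤ ρ n n := by
      intro n
      exact hρ.1.diag_nonneg
    -- trace over S is 1
    have htrS : ∑ n ∈ S, ρ n n = 1 := by
      have h1 : ρ.trace = ∑ n : Fin D, ρ n n := rfl
      have h2 : ∑ n : Fin D, ρ n n = ∑ n ∈ S, ρ n n :=
        (Finset.sum_subset (Finset.subset_univ S)
          (fun n _ hn => hzero n n (Or.inl hn))).symm
      rw [← h2, ← h1, hρ.2]
    -- rewrite L - v
    have hLv : L - v = ∑ n ∈ S, ρ n n * (PiA n n - v) := by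
      have h : ∑ n ∈ S, ρ n n * (PiA n n - v)
          = (∑ n ∈ S, ρ n n * PiA n n) - (∑ n ∈ S, ρ n n) * v := by
        rw [Finset.sum_mul, ← Finset.sum_sub_distrib]
        exact Finset.sum_congr rfl fun n _ => by ring
      rw [hLdiag, h, htrS, one_mul]
    -- absolute values of diagonal entries
    have habs : ∀ n : Fin D, ‖ρ n n‖ = (ρ n n).re := by
      intro n
      obtain ⟨hre, him⟩ := Complex.nonneg_iff.mp (hdiag_nonneg n)
      rw [Complex.norm_def, Complex.normSq_apply, ← him]
      simp only [mul_zero, add_zero]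
      exact Real.sqrt_mul_self hre
    have hsum_re : ∑ n ∈ S, (ρ n n).re = 1 := by
      have h := congrArg Complex.re htrS
      rw [Complex.re_sum] at h
      simpa using h
    obtain hS : S.Nonempty := Finset.card_pos.mp hd
    set M := S.sup' hS (fun n => ‖PiA n n - v‖) with hM
    have hMε : M < ε := (Finset.sup'_lt_iff hS).mpr hET
    calc ‖L - v‖
        = ‖(∑ n ∈ S, ρ n n * (PiA n n - v))‖ := by rw [hLv]
      _ ≤ ∑ n ∈ S, ‖ρ n n * (PiA n n - v)‖ := norm_sum_le _ _
      _ = ∑ n ∈ S, (ρ n n).re * ‖PiA n n - v‖ := by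
          refine Finset.sum_congr rfl fun n _ => ?_
          rw [norm_mul, habs n]
      _ ≤ ∑ n ∈ S, (ρ n n).re * M := by
          refine Finset.sum_le_sum fun n hn => ?_
          have h0 : 0 ≤ (ρ n n).re := (Complex.nonneg_iff.mp (hdiag_nonneg n)).1
          exact mul_le_mul_of_nonneg_left
            (Finset.le_sup' (fun n => ‖PiA n n - v‖) hn) h0
      _ = M := by rw [← Finset.sum_mul, hsum_re, one_mul]
      _ < ε := hMε

end QET
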